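/- Let Δ : ℕ^(2) ↠ [k] be a surjective colouring with k ≥ 2, and suppose l ∈ F_Δ with l < k. Then there exists l' ∈ F_Δ with l + 1 ≤ l' ≤ 2l. -/

import Mathlib

/-- The colour of the unordered edge `{x, y}` (only values on distinct pairs matter). -/
def edgeCol (Δ : ℕ → ℕ → ℕ) (x y : ℕ) : ℕ := Δ (min x y) (max x y)

/-- `colourSet Δ X` is the set of colours attained by `Δ` on edges with both endpoints in `X`. -/
def colourSet (Δ : ℕ → ℕ → ℕ) (X : Set ℕ) : Set ℕ :=
  {c | ∃ x ∈ X, ∃ y ∈ X, x ≠ y ∧ edgeCol Δ x y = c}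

/-- `Δ` is a surjective colouring `ℕ^(2) ↠ [k]` of the edges of the complete
graph on `ℕ` with colour set `[k] = {1, …, k}`. -/
def IsColouring (Δ : ℕ → ℕ → ℕ) (k : ℕ) : Prop :=
  (∀ x y : ℕ, x ≠ y → edgeCol Δ x y ∈ Finset.Icc 1 k) ∧
  (∀ c ∈ Finset.Icc 1 k, ∃ x y : ℕ, x ≠ y ∧ edgeCol Δ x y = c)

/-- `F_Δ`: the set of `m ∈ [k]` for which some infinite `X ⊆ ℕ` is exactly `m`-coloured. -/
def FSet (Δ : ℕ → ℕ → ℕ) (k : ℕ) : Set ℕ :=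
  {m | m ∈ Finset.Icc 1 k ∧ ∃ X : Set ℕ, X.Infinite ∧ (colourSet Δ X).ncard = m}

lemma edgeCol_comm (Δ : ℕ → ℕ → ℕ) (x y : ℕ) : edgeCol Δ x y = edgeCol Δ y x := by
  simp [edgeCol, min_comm, max_comm]

lemma colourSet_mono (Δ : ℕ → ℕ → ℕ) {S T : Set ℕ} (h : S ⊆ T) :
    colourSet Δ S ⊆ colourSet Δ T := by
  rintro c ⟨x, hx, y, hy, hxy, rfl⟩
  exact ⟨x, h hx, y, h hy, hxy, rfl⟩

lemma mem_colourSet (Δ : ℕ → ℕ → ℕ) {S : Set ℕ} {x y : ℕ} (hx : x ∈ S) (hy : y ∈ S)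
    (hxy : x ≠ y) : edgeCol Δ x y ∈ colourSet Δ S := ⟨x, hx, y, hy, hxy, rfl⟩

lemma colourSet_subset_Icc {Δ : ℕ → ℕ → ℕ} {k : ℕ} (hΔ : IsColouring Δ k) (S : Set ℕ) :
    colourSet Δ S ⊆ ↑(Finset.Icc 1 k) := by
  rintro c ⟨x, _, y, _, hxy, rfl⟩
  exact_mod_cast hΔ.1 x y hxy

lemma colourSet_finite {Δ : ℕ → ℕ → ℕ} {k : ℕ} (hΔ : IsColouring Δ k) (S : Set ℕ) :
    (colourSet Δ S).Finite :=
  (Finset.Icc 1 k).finite_toSet.subset (colourSet_subset_Icc hΔ S)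

lemma colourSet_insert_subset (Δ : ℕ → ℕ → ℕ) (a : ℕ) (Z : Set ℕ) :
    colourSet Δ (Z ∪ {a}) ⊆ colourSet Δ Z ∪ (fun z => edgeCol Δ a z) '' Z := by
  rintro c ⟨x, hx, y, hy, hxy, rfl⟩
  simp only [Set.mem_union, Set.mem_singleton_iff] at hx hy
  rcases hx with hx | hx <;> rcases hy with hy | hy
  · exact Or.inl ⟨x, hx, y, hy, hxy, rfl⟩
  · exact Or.inr ⟨x, hx, by rw [hy, edgeCol_comm]⟩
  · exact Or.inr ⟨y, hy, by rw [hx]⟩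
  · exact absurd (hx.trans hy.symm) hxy

lemma colourSet_union_pair_subset (Δ : ℕ → ℕ → ℕ) {a b : ℕ} (hab : a ≠ b) (Z : Set ℕ) :
    colourSet Δ (Z ∪ {a, b}) ⊆
      colourSet Δ (Z ∪ {a}) ∪ colourSet Δ (Z ∪ {b}) ∪ {edgeCol Δ a b} := by
  rintro c ⟨x, hx, y, hy, hxy, rfl⟩
  simp only [Set.mem_union, Set.mem_insert_iff, Set.mem_singleton_iff] at hx hy
  by_cases hxa : x = a
  · rcases hy with hy | hy | hy
    · exact Or.inl (Or.inl ⟨x, by simp [hxa], y, Or.inl hy, hxy, rfl⟩)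
    · exact absurd (hxa.trans hy.symm) hxy
    · exact Or.inr (by simp [hxa, hy])
  · by_cases hya : y = a
    · rcases hx with hx | hx | hx
      · exact Or.inl (Or.inl ⟨x, Or.inl hx, y, by simp [hya], hxy, rfl⟩)
      · exact absurd hx hxa
      · exact Or.inr (by simp [hx, hya, edgeCol_comm Δ b a])
    · have hx' : x ∈ Z ∪ {b} := by
        rcases hx with hx | hx | hx
        · exact Or.inl hx
        · exact absurd hx hxa
        · exact Or.inr hx
      have hy' : y ∈ Z ∪ {b} := by
        rcases hy with hy | hy | hy
        · exact Or.inl hy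
        · exact absurd hy hya
        · exact Or.inr hy
      exact Or.inl (Or.inr ⟨x, hx', y, hy', hxy, rfl⟩)

lemma pigeonhole_pair {Y : Set ℕ} (hY : Y.Infinite) (f : ℕ → ℕ × ℕ) (F : Finset (ℕ × ℕ))
    (hf : ∀ x ∈ Y, f x ∈ F) : ∃ p ∈ F, {x ∈ Y | f x = p}.Infinite := by
  by_contra h
  push_neg at h
  have hfin : (⋃ p ∈ F, {x ∈ Y | f x = p}).Finite :=
    Set.Finite.biUnion F.finite_toSet fun p hp => h p hp
  refine hY (hfin.subset fun x hx => ?_)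
  exact Set.mem_biUnion (hf x hx) ⟨hx, rfl⟩

lemma card_union_union_singleton {P Q R : Set ℕ} {c : ℕ} (hP : P.Finite) (hQ : Q.Finite)
    (hRP : R ⊆ P) (hRQ : R ⊆ Q) :
    (P ∪ Q ∪ {c}).ncard + R.ncard ≤ P.ncard + Q.ncard + 1 := by
  have h1 : (P ∪ Q ∪ {c}).ncard ≤ (P ∪ Q).ncard + 1 := by
    have := Set.ncard_union_le (P ∪ Q) {c}
    simpa using this
  have h2 : (P ∪ Q).ncard + (P ∩ Q).ncard = P.ncard + Q.ncard :=
    Set.ncard_union_add_ncard_inter P Q hP hQ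
  have h3 : R.ncard ≤ (P ∩ Q).ncard :=
    Set.ncard_le_ncard (Set.subset_inter hRP hRQ) (hP.inter_of_left Q)
  omega

/-- **Lemma 4.** If `l ∈ F_Δ` and `l < k`, then there is `l' ∈ F_Δ` with `l + 1 ≤ l' ≤ 2l`. -/
theorem erickson_step (k : ℕ) (hk : 2 ≤ k) (Δ : ℕ → ℕ → ℕ) (hΔ : IsColouring Δ k)
    (l : ℕ) (hl : l ∈ FSet Δ k) (hlk : l < k) :
    ∃ l' ∈ FSet Δ k, l + 1 ≤ l' ∧ l' ≤ 2 * l := by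
  by_contra hDone
  push_neg at hDone
  obtain ⟨hlIcc, X, hXinf, hXl⟩ := hl
  rw [Finset.mem_Icc] at hlIcc
  have hl1 : 1 ≤ l := hlIcc.1
  have hIccCard : ((Finset.Icc 1 k : Finset ℕ) : Set ℕ).ncard = k := by
    rw [Set.ncard_coe_finset, Nat.card_Icc]; omega
  have hXfin : (colourSet Δ X).Finite := colourSet_finite hΔ X
  -- `push`: since no value in `[l+1, 2l]` lies in `F`, any infinite set whose colour count is
  -- at most `2l` in fact has colour count at most `l`.
  have push : ∀ Y : Set ℕ, Y.Infinite → (colourSet Δ Y).ncard ≤ 2 * l →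
      (colourSet Δ Y).ncard ≤ l := by
    intro Y hYinf h2l
    by_contra h
    push_neg at h
    have hk' : (colourSet Δ Y).ncard ≤ k := by
      have := Set.ncard_le_ncard (colourSet_subset_Icc hΔ Y) (Finset.Icc 1 k).finite_toSet
      omega
    have hmem : (colourSet Δ Y).ncard ∈ FSet Δ k :=
      ⟨Finset.mem_Icc.mpr ⟨by omega, hk'⟩, Y, hYinf, rfl⟩
    have := hDone _ hmem (by omega); omega
  -- a missing colour c, attained on some edge {a, b}
  have hmiss : ∃ c ∈ Finset.Icc 1 k, c ∉ colourSet Δ X := by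
    by_contra h
    push_neg at h
    have hsub : ((Finset.Icc 1 k : Finset ℕ) : Set ℕ) ⊆ colourSet Δ X := fun c hc =>
      h c (by exact_mod_cast hc)
    have := Set.ncard_le_ncard hsub hXfin
    omega
  obtain ⟨c, hcIcc, hcX⟩ := hmiss
  obtain ⟨a, b, hab, hcab⟩ := hΔ.2 c hcIcc
  -- pigeonhole: an infinite X₂ ⊆ X \ {a,b} on which edges to a and b have constant colours d, e
  have hY : (X \ {a, b}).Infinite := hXinf.diff ((Set.finite_singleton b).insert a)
  obtain ⟨⟨d, e⟩, hdeF, hX2inf⟩ := pigeonhole_pair hY (fun x => (edgeCol Δ a x, edgeCol Δ b x))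
      (Finset.Icc 1 k ×ˢ Finset.Icc 1 k) (fun x hx => by
        rw [Finset.mem_product]
        have hxa : x ≠ a := fun h => hx.2 (by simp [h])
        have hxb : x ≠ b := fun h => hx.2 (by simp [h])
        exact ⟨hΔ.1 a x (Ne.symm hxa), hΔ.1 b x (Ne.symm hxb)⟩)
  set X₂ : Set ℕ := {x ∈ X \ {a, b} | (fun x => (edgeCol Δ a x, edgeCol Δ b x)) x = (d, e)}
    with hX₂def
  have hX₂X : X₂ ⊆ X := fun x hx => hx.1.1
  have haX₂ : a ∉ X₂ := fun hx => hx.1.2 (by simp)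
  have hbX₂ : b ∉ X₂ := fun hx => hx.1.2 (by simp)
  have hda : ∀ x ∈ X₂, edgeCol Δ a x = d := fun x hx => congrArg Prod.fst hx.2
  have heb : ∀ x ∈ X₂, edgeCol Δ b x = e := fun x hx => congrArg Prod.snd hx.2
  have hX₂ne : (colourSet Δ X₂).Nonempty := by
    obtain ⟨x, hx, y, hy, hxy⟩ := hX2inf.nontrivial
    exact ⟨_, mem_colourSet Δ hx hy hxy⟩
  set m := (colourSet Δ X₂).ncard with hmdef
  have hm1 : 1 ≤ m := by
    have := (Set.ncard_pos (colourSet_finite hΔ X₂)).mpr hX₂ne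
    omega
  have hml : m ≤ l := hXl ▸ Set.ncard_le_ncard (colourSet_mono Δ hX₂X) hXfin
  -- a convenient cardinality bound + push
  have key : ∀ Z P Q : Set ℕ, Z.Infinite → P.Finite → Q.Finite →
      colourSet Δ X₂ ⊆ P → colourSet Δ X₂ ⊆ Q → P.ncard ≤ l → Q.ncard ≤ l →
      ∀ c' : ℕ, colourSet Δ Z ⊆ P ∪ Q ∪ {c'} → (colourSet Δ Z).ncard ≤ l := by
    intro Z P Q hZinf hP hQ hRP hRQ hPl hQl c' hsub
    have h1 := card_union_union_singleton (c := c') hP hQ hRP hRQ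
    have h2 : (colourSet Δ Z).ncard ≤ (P ∪ Q ∪ {c'}).ncard :=
      Set.ncard_le_ncard hsub (((hP.union hQ).union (Set.finite_singleton c')))
    exact push Z hZinf (by omega)
  -- the main induction
  have main : ∀ S : Finset ℕ, ↑S ⊆ X \ ({a, b} : Set ℕ) →
      (colourSet Δ (X₂ ∪ ↑S ∪ {a})).ncard ≤ l ∧
      (colourSet Δ (X₂ ∪ ↑S ∪ {b})).ncard ≤ l ∧
      (colourSet Δ (X₂ ∪ ↑S ∪ {a, b})).ncard ≤ l := by
    intro S
    induction S using Finset.induction_on with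
    | empty =>
      intro _
      simp only [Finset.coe_empty, Set.union_empty]
      have hinfA : (X₂ ∪ {a}).Infinite := hX2inf.mono Set.subset_union_left
      have hinfB : (X₂ ∪ {b}).Infinite := hX2inf.mono Set.subset_union_left
      have hinfU : (X₂ ∪ {a, b}).Infinite := hX2inf.mono Set.subset_union_left
      have hA : (colourSet Δ (X₂ ∪ {a})).ncard ≤ l := by
        have hsub : colourSet Δ (X₂ ∪ {a}) ⊆ colourSet Δ X₂ ∪ {d} := by
          intro t ht
          rcases colourSet_insert_subset Δ a X₂ ht with h | ⟨z, hz, rfl⟩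
          · exact Or.inl h
          · exact Or.inr (hda z hz)
        have hcard : (colourSet Δ (X₂ ∪ {a})).ncard ≤ m + 1 := by
          have h2 : (colourSet Δ (X₂ ∪ {a})).ncard ≤ (colourSet Δ X₂ ∪ {d}).ncard :=
            Set.ncard_le_ncard hsub ((colourSet_finite hΔ X₂).union (Set.finite_singleton d))
          have h3 := Set.ncard_union_le (colourSet Δ X₂) ({d} : Set ℕ)
          simp only [Set.ncard_singleton] at h3
          omega
        exact push _ hinfA (by omega)
      have hB : (colourSet Δ (X₂ ∪ {b})).ncard ≤ l := by
        have hsub : colourSet Δ (X₂ ∪ {b}) ⊆ colourSet Δ X₂ ∪ {e} := by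
          intro t ht
          rcases colourSet_insert_subset Δ b X₂ ht with h | ⟨z, hz, rfl⟩
          · exact Or.inl h
          · exact Or.inr (heb z hz)
        have hcard : (colourSet Δ (X₂ ∪ {b})).ncard ≤ m + 1 := by
          have h2 : (colourSet Δ (X₂ ∪ {b})).ncard ≤ (colourSet Δ X₂ ∪ {e}).ncard :=
            Set.ncard_le_ncard hsub ((colourSet_finite hΔ X₂).union (Set.finite_singleton e))
          have h3 := Set.ncard_union_le (colourSet Δ X₂) ({e} : Set ℕ)
          simp only [Set.ncard_singleton] at h3
          omega
        exact push _ hinfB (by omega)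
      refine ⟨hA, hB, ?_⟩
      exact key _ _ _ hinfU (colourSet_finite hΔ _) (colourSet_finite hΔ _)
        (colourSet_mono Δ Set.subset_union_left) (colourSet_mono Δ Set.subset_union_left)
        hA hB c (hcab ▸ colourSet_union_pair_subset Δ hab X₂)
    | @insert w S hwS ih =>
      intro hS'
      have hSX : (↑S : Set ℕ) ⊆ X \ ({a, b} : Set ℕ) := by
        intro x hx; exact hS' (by simp [hx])
      obtain ⟨ihA, ihB, _⟩ := ih hSX
      have hwX : w ∈ X \ ({a, b} : Set ℕ) := hS' (by simp)
      have hwa : w ≠ a := fun h => hwX.2 (by simp [h])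
      have hwb : w ≠ b := fun h => hwX.2 (by simp [h])
      have hsubX : X₂ ∪ ↑(insert w S) ⊆ X := by
        intro x hx
        rcases hx with hx | hx
        · exact hX₂X hx
        · exact (hS' hx).1
      have hinfA : (X₂ ∪ ↑(insert w S) ∪ {a}).Infinite :=
        hX2inf.mono (fun x hx => Or.inl (Or.inl hx))
      have hinfB : (X₂ ∪ ↑(insert w S) ∪ {b}).Infinite :=
        hX2inf.mono (fun x hx => Or.inl (Or.inl hx))
      have hinfU : (X₂ ∪ ↑(insert w S) ∪ {a, b}).Infinite :=
        hX2inf.mono (fun x hx => Or.inl (Or.inl hx))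
      -- a-part
      have hA : (colourSet Δ (X₂ ∪ ↑(insert w S) ∪ {a})).ncard ≤ l := by
        refine key _ _ _ hinfA hXfin (colourSet_finite hΔ _)
          (colourSet_mono Δ hX₂X) (colourSet_mono Δ (fun x hx => Or.inl (Or.inl hx)))
          (le_of_eq hXl) ihA (edgeCol Δ a w) ?_
        intro t ht
        rcases colourSet_insert_subset Δ a (X₂ ∪ ↑(insert w S)) ht with h | ⟨z, hz, rfl⟩
        · exact Or.inl (Or.inl (colourSet_mono Δ hsubX h))
        · rcases hz with hz | hz
          · exact Or.inl (Or.inr (mem_colourSet Δ (Set.mem_union_right _ rfl)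
                (Or.inl (Or.inl hz)) (fun h => haX₂ (h ▸ hz))))
          · rw [Finset.coe_insert, Set.mem_insert_iff] at hz
            rcases hz with hz | hz
            · exact Or.inr (by simp [hz])
            · have hza : z ≠ a := fun h => (hSX hz).2 (by simp [h])
              exact Or.inl (Or.inr (mem_colourSet Δ (Set.mem_union_right _ rfl)
                (Or.inl (Or.inr hz)) (Ne.symm hza)))
      -- b-part
      have hB : (colourSet Δ (X₂ ∪ ↑(insert w S) ∪ {b})).ncard ≤ l := by
        refine key _ _ _ hinfB hXfin (colourSet_finite hΔ _)
          (colourSet_mono Δ hX₂X) (colourSet_mono Δ (fun x hx => Or.inl (Or.inl hx)))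
          (le_of_eq hXl) ihB (edgeCol Δ b w) ?_
        intro t ht
        rcases colourSet_insert_subset Δ b (X₂ ∪ ↑(insert w S)) ht with h | ⟨z, hz, rfl⟩
        · exact Or.inl (Or.inl (colourSet_mono Δ hsubX h))
        · rcases hz with hz | hz
          · exact Or.inl (Or.inr (mem_colourSet Δ (Set.mem_union_right _ rfl)
                (Or.inl (Or.inl hz)) (fun h => hbX₂ (h ▸ hz))))
          · rw [Finset.coe_insert, Set.mem_insert_iff] at hz
            rcases hz with hz | hz
            · exact Or.inr (by simp [hz])
            · have hzb : z ≠ b := fun h => (hSX hz).2 (by simp [h])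
              exact Or.inl (Or.inr (mem_colourSet Δ (Set.mem_union_right _ rfl)
                (Or.inl (Or.inr hz)) (Ne.symm hzb)))
      refine ⟨hA, hB, ?_⟩
      exact key _ _ _ hinfU (colourSet_finite hΔ _) (colourSet_finite hΔ _)
        (colourSet_mono Δ (fun x hx => Or.inl (Or.inl hx)))
        (colourSet_mono Δ (fun x hx => Or.inl (Or.inl hx)))
        hA hB c (hcab ▸ colourSet_union_pair_subset Δ hab (X₂ ∪ ↑(insert w S)))
  -- choose witness edges for every colour of X
  have hch : ∀ t : ℕ, ∃ p : ℕ × ℕ, t ∈ colourSet Δ X →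
      p.1 ∈ X ∧ p.2 ∈ X ∧ p.1 ≠ p.2 ∧ edgeCol Δ p.1 p.2 = t := by
    intro t
    by_cases h : t ∈ colourSet Δ X
    · obtain ⟨x, hx, y, hy, hxy, he⟩ := h
      exact ⟨(x, y), fun _ => ⟨hx, hy, hxy, he⟩⟩
    · exact ⟨(0, 1), fun h' => absurd h' h⟩
  choose g hg using hch
  classical
  set W : Finset ℕ :=
    (hXfin.toFinset.biUnion (fun t => {(g t).1, (g t).2})) \ {a, b} with hWdef
  have hWsub : (↑W : Set ℕ) ⊆ X \ ({a, b} : Set ℕ) := by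
    intro x hx
    rw [Finset.coe_sdiff, Set.mem_diff] at hx
    obtain ⟨hx1, hx2⟩ := hx
    constructor
    · rw [Finset.mem_coe, Finset.mem_biUnion] at hx1
      obtain ⟨t, htF, hxt⟩ := hx1
      rw [Set.Finite.mem_toFinset] at htF
      have := hg t htF
      rw [Finset.mem_insert, Finset.mem_singleton] at hxt
      rcases hxt with h | h
      · exact h ▸ this.1
      · exact h ▸ this.2.1
    · intro h
      apply hx2
      simpa using h
  obtain ⟨_, _, hU⟩ := main W hWsub
  -- but the colour set of X₂ ∪ W ∪ {a, b} contains all l colours of X together with c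
  have hcover : insert c (colourSet Δ X) ⊆ colourSet Δ (X₂ ∪ ↑W ∪ {a, b}) := by
    intro t ht
    rcases ht with rfl | ht
    · exact hcab ▸ mem_colourSet Δ (Or.inr (Or.inl rfl)) (Or.inr (Or.inr rfl)) hab
    · have hgt := hg t ht
      have hmem : ∀ u : ℕ, u ∈ X → (u ∈ hXfin.toFinset.biUnion (fun t => {(g t).1, (g t).2})) →
          u ∈ X₂ ∪ ↑W ∪ {a, b} := by
        intro u _ hub
        by_cases hu : u = a ∨ u = b
        · rcases hu with hu | hu
          · exact Or.inr (Or.inl hu)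
          · exact Or.inr (Or.inr hu)
        · push_neg at hu
          refine Or.inl (Or.inr ?_)
          rw [Finset.mem_coe, hWdef, Finset.mem_sdiff]
          refine ⟨hub, ?_⟩
          rw [Finset.mem_insert, Finset.mem_singleton]
          tauto
      have h1b : (g t).1 ∈ hXfin.toFinset.biUnion (fun t => {(g t).1, (g t).2}) := by
        rw [Finset.mem_biUnion]
        exact ⟨t, (Set.Finite.mem_toFinset hXfin).mpr ht, by simp⟩
      have h2b : (g t).2 ∈ hXfin.toFinset.biUnion (fun t => {(g t).1, (g t).2}) := by
        rw [Finset.mem_biUnion]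
        exact ⟨t, (Set.Finite.mem_toFinset hXfin).mpr ht, by simp⟩
      exact hgt.2.2.2 ▸ mem_colourSet Δ (hmem _ hgt.1 h1b) (hmem _ hgt.2.1 h2b) hgt.2.2.1
  have hfinal : l + 1 ≤ (colourSet Δ (X₂ ∪ ↑W ∪ {a, b})).ncard := by
    have h1 : (insert c (colourSet Δ X)).ncard = l + 1 := by
      rw [Set.ncard_insert_of_notMem hcX hXfin, hXl]
    calc l + 1 = (insert c (colourSet Δ X)).ncard := h1.symm
      _ ≤ (colourSet Δ (X₂ ∪ ↑W ∪ {a, b})).ncard :=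
        Set.ncard_le_ncard hcover (colourSet_finite hΔ _)
  omega
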